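/- Let d ≥ 0 and m ≥ 1 be integers, let X be a ground set with m elements, and let f be a normalized monotone superadditive set function on X that is d-scopic submodular (equivalently, of supermodular width at most d). Then for every S ⊆ X there exists a set function g on X that is (d+1)-constraint homogeneous (CH-(d+1)) such that (d + 1)·H_{⌈m/(d+1)⌉}·g(S) ≥ f(S) and g(T) ≤ f(T) for every T ⊆ X. In other words, the class of superadditive functions of supermodular width at most d is pointwise (d + 1)·H_{⌈m/(d+1)⌉}-approximated by CH-(d+1). -/

import Mathlib

variable {α : Type*} [Fintype α] [DecidableEq α]

/-- The margin of `S` given `T`: `f(S|T) = f(S ∪ T) - f(T)`. -/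
def margin (f : Finset α → ℝ) (S T : Finset α) : ℝ := f (S ∪ T) - f T

/-- `f` is `d`-scopic submodular: for all `S ⊆ T` and `v ∉ T`,
`f({v}|T) ≤ max_{T' ⊆ T, |T'| ≤ d} f({v}|S ∪ T')`. -/
def ScopicSubmodular (d : ℕ) (f : Finset α → ℝ) : Prop :=
  ∀ S T : Finset α, S ⊆ T → ∀ v, v ∉ T →
    ∃ T' : Finset α, T' ⊆ T ∧ T'.card ≤ d ∧ margin f {v} T ≤ margin f {v} (S ∪ T')

/-- `g` is `d`-constraint homogeneous (CH-`d`): there are a real `w ≥ 0` and pairwise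
disjoint sets `Q_1, …, Q_h`, each of size at most `d`, such that
`g(S) = w · Σ_{i : Q_i ⊆ S} |Q_i|` for every `S`. -/
def CH (d : ℕ) (g : Finset α → ℝ) : Prop :=
  ∃ (w : ℝ) (h : ℕ) (Q : Fin h → Finset α), 0 ≤ w ∧
    (∀ i, (Q i).card ≤ d) ∧ (∀ i j, i ≠ j → Disjoint (Q i) (Q j)) ∧
    ∀ S : Finset α,
      g S = w * ∑ i ∈ Finset.univ.filter (fun i => Q i ⊆ S), ((Q i).card : ℝ)

/-- The `n`-th harmonic number `H_n = Σ_{k=1}^n 1/k`. -/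
noncomputable def harmonic' (n : ℕ) : ℝ := ∑ k ∈ Finset.Icc 1 n, (1 : ℝ) / k

-- L1: peel lemma
lemma peel_aux (d : ℕ) (f : Finset α → ℝ)
    (hnorm : f ∅ = 0) (hmono : ∀ S T : Finset α, S ⊆ T → f S ≤ f T)
    (hscopic : ScopicSubmodular d f) (M : ℝ)
    (W : Finset α) :
    ∀ n : ℕ, ∀ U : Finset α, (U \ W).card = n → W ⊆ U →
      (∀ Q : Finset α, Q ⊆ U → Q.card ≤ d + 1 → f Q ≤ M) →
      f U ≤ f W + n * M := by
  intro n
  induction n with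
  | zero =>
    intro U hcard hWU _
    have : U \ W = ∅ := Finset.card_eq_zero.mp hcard
    have hUW : U = W := Finset.Subset.antisymm (by
      intro x hx
      by_contra hxW
      exact (Finset.notMem_empty x) (this ▸ Finset.mem_sdiff.mpr ⟨hx, hxW⟩)) hWU
    simp [hUW]
  | succ n ih =>
    intro U hcard hWU hM
    have hne : (U \ W).Nonempty := by
      rw [← Finset.card_pos, hcard]; omega
    obtain ⟨v, hv⟩ := hne
    have hvU : v ∈ U := (Finset.mem_sdiff.mp hv).1
    have hvW : v ∉ W := (Finset.mem_sdiff.mp hv).2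
    -- apply scopic with S = ∅, T = U \ {v}
    have hvnot : v ∉ U \ {v} := by simp
    obtain ⟨T', hT'sub, hT'card, hT'⟩ := hscopic ∅ (U \ {v}) (Finset.empty_subset _) v hvnot
    have hstep : f U - f (U \ {v}) ≤ M := by
      have h1 : margin f {v} (U \ {v}) = f U - f (U \ {v}) := by
        unfold margin
        rw [Finset.union_sdiff_of_subset (Finset.singleton_subset_iff.mpr hvU)]
      have h2 : margin f {v} (∅ ∪ T') ≤ M := by
        unfold margin
        have hfT' : 0 ≤ f T' := hnorm ▸ hmono ∅ T' (Finset.empty_subset _)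
        have hsub : {v} ∪ (∅ ∪ T') ⊆ U := by
          intro x hx
          simp only [Finset.empty_union, Finset.mem_union, Finset.mem_singleton] at hx
          rcases hx with rfl | hx
          · exact hvU
          · exact (Finset.sdiff_subset) (hT'sub hx)
        have hcard' : ({v} ∪ (∅ ∪ T')).card ≤ d + 1 := by
          simp only [Finset.empty_union]
          calc ({v} ∪ T').card ≤ ({v} : Finset α).card + T'.card := Finset.card_union_le _ _
            _ ≤ 1 + d := by simp; omega
            _ = d + 1 := by omega
        have := hM _ hsub hcard'
        have h0 : 0 ≤ f (∅ ∪ T') := by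
          rw [Finset.empty_union]; exact hfT'
        linarith
      linarith [h1 ▸ hT', h2]
    have hWU' : W ⊆ U \ {v} := by
      intro x hx
      exact Finset.mem_sdiff.mpr ⟨hWU hx, fun hxv => hvW ((Finset.mem_singleton.mp hxv) ▸ hx)⟩
    have hcard' : ((U \ {v}) \ W).card = n := by
      have : (U \ {v}) \ W = (U \ W).erase v := by
        ext x
        simp only [Finset.mem_sdiff, Finset.mem_erase, Finset.mem_singleton]
        tauto
      rw [this, Finset.card_erase_of_mem hv, hcard]
      omega
    have hM' : ∀ Q : Finset α, Q ⊆ U \ {v} → Q.card ≤ d + 1 → f Q ≤ M :=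
      fun Q hQ hQc => hM Q (hQ.trans Finset.sdiff_subset) hQc
    have := ih (U \ {v}) hcard' hWU' hM'
    push_cast
    linarith

-- L2: superadditive over disjoint family
lemma superadd_family (f : Finset α → ℝ)
    (hnorm : f ∅ = 0) (hmono : ∀ S T : Finset α, S ⊆ T → f S ≤ f T)
    (hsuperadd : ∀ S T : Finset α, Disjoint S T → f S + f T ≤ f (S ∪ T))
    {h : ℕ} (Q : Fin h → Finset α)
    (hdisj : ∀ i j, i ≠ j → Disjoint (Q i) (Q j)) :
    ∀ I : Finset (Fin h), ∀ T : Finset α, (∀ i ∈ I, Q i ⊆ T) →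
      ∑ i ∈ I, f (Q i) ≤ f T := by
  intro I
  induction I using Finset.induction with
  | empty =>
    intro T _
    simp only [Finset.sum_empty]
    exact hnorm ▸ hmono ∅ T (Finset.empty_subset _)
  | @insert a I ha ih =>
    intro T hsub
    rw [Finset.sum_insert ha]
    have hQa : Q a ⊆ T := hsub a (Finset.mem_insert_self a I)
    have hrest : ∀ i ∈ I, Q i ⊆ T \ Q a := by
      intro i hi
      have h1 : Q i ⊆ T := hsub i (Finset.mem_insert_of_mem hi)
      have h2 : Disjoint (Q i) (Q a) := hdisj i a (by rintro rfl; exact ha hi)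
      intro x hx
      exact Finset.mem_sdiff.mpr ⟨h1 hx, fun hxa => (Finset.disjoint_left.mp h2) hx hxa⟩
    have := ih (T \ Q a) hrest
    have hdj : Disjoint (Q a) (T \ Q a) := Finset.disjoint_sdiff
    have := hsuperadd (Q a) (T \ Q a) hdj
    have hun : Q a ∪ (T \ Q a) = T := Finset.union_sdiff_of_subset hQa
    rw [hun] at this
    linarith [ih (T \ Q a) hrest]

-- L3: greedy decomposition
lemma greedy_decomp (d : ℕ) (f : Finset α → ℝ)
    (hnorm : f ∅ = 0) (hmono : ∀ S T : Finset α, S ⊆ T → f S ≤ f T)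
    (hscopic : ScopicSubmodular d f) :
    ∀ n : ℕ, ∀ S : Finset α, S.card = n → S.Nonempty →
      ∃ t : ℕ, ∃ Q : Fin (t + 1) → Finset α,
        (∀ i, Q i ⊆ S) ∧ (∀ i, (Q i).Nonempty) ∧ (∀ i, (Q i).card ≤ d + 1) ∧
        (∀ i j, i ≠ j → Disjoint (Q i) (Q j)) ∧
        (∀ i j : Fin (t + 1), i < j → (Q i).card = d + 1) ∧
        (∀ i j : Fin (t + 1), i ≤ j → f (Q j) ≤ f (Q i)) ∧
        (∑ i, (Q i).card = S.card) ∧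
        f S ≤ ∑ i, ((Q i).card : ℝ) * f (Q i) := by
  intro n
  induction n using Nat.strong_induction_on with
  | _ n ih =>
  intro S hcard hne
  obtain ⟨q, hqd, hqle, hq1, hqmin⟩ :
      ∃ q, q ≤ d + 1 ∧ q ≤ S.card ∧ 1 ≤ q ∧ (q = d + 1 ∨ q = S.card) :=
    ⟨min (d + 1) S.card, min_le_left _ _, min_le_right _ _,
      le_min (by omega) (Finset.card_pos.mpr hne), min_choice _ _⟩
  obtain ⟨Q₀, hQ₀mem, hQ₀max⟩ :=
    Finset.exists_max_image (S.powersetCard q) f (Finset.powersetCard_nonempty.2 hqle)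
  obtain ⟨hQ₀S, hQ₀card⟩ := Finset.mem_powersetCard.mp hQ₀mem
  have hmax : ∀ R : Finset α, R ⊆ S → R.card ≤ d + 1 → f R ≤ f Q₀ := by
    intro R hRS hRc
    have hRq : R.card ≤ q := by
      have := Finset.card_le_card hRS
      omega
    obtain ⟨R', hRR', hR'S, hR'c⟩ := Finset.exists_subsuperset_card_eq hRS hRq hqle
    exact (hmono R R' hRR').trans
      (hQ₀max R' (Finset.mem_powersetCard.mpr ⟨hR'S, hR'c⟩))
  set S' := S \ Q₀ with hS'def
  have hS'card : S'.card = S.card - q := by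
    rw [hS'def, Finset.card_sdiff_of_subset hQ₀S, hQ₀card]
  have hpeel : f S ≤ f S' + (q : ℝ) * f Q₀ := by
    have hc : (S \ S').card = q := by
      rw [hS'def, Finset.sdiff_sdiff_self_left,
        Finset.inter_eq_right.mpr hQ₀S, hQ₀card]
    have := peel_aux d f hnorm hmono hscopic (f Q₀) S' q S hc
      Finset.sdiff_subset hmax
    linarith
  by_cases hS' : S'.Nonempty
  · -- recursive case
    have hlt : S'.card < n := by
      rw [hS'card]; omega
    have hq : q = d + 1 := by
      have := Finset.card_pos.mpr hS'
      rcases hqmin with h | h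
      · exact h
      · omega
    obtain ⟨t', Q', hsub', hne', hcard', hdisj', hfull', hanti', hsum', hineq'⟩ :=
      ih S'.card hlt S' rfl hS'
    refine ⟨t' + 1, Fin.cons Q₀ Q', ?_, ?_, ?_, ?_, ?_, ?_, ?_, ?_⟩
    · intro i
      induction i using Fin.cases with
      | zero => simpa using hQ₀S
      | succ i => simpa using (hsub' i).trans Finset.sdiff_subset
    · intro i
      induction i using Fin.cases with
      | zero => simpa using Finset.card_pos.mp (by omega)
      | succ i => simpa using hne' i
    · intro i
      induction i using Fin.cases with
      | zero => rw [Fin.cons_zero, hQ₀card]; exact hqd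
      | succ i => simpa using hcard' i
    · intro i j hij
      induction i using Fin.cases with
      | zero =>
        induction j using Fin.cases with
        | zero => exact absurd rfl hij
        | succ j =>
          simp only [Fin.cons_zero, Fin.cons_succ]
          have : Q' j ⊆ S' := hsub' j
          rw [Finset.disjoint_right]
          intro x hx
          exact (Finset.mem_sdiff.mp (this hx)).2
      | succ i =>
        induction j using Fin.cases with
        | zero =>
          simp only [Fin.cons_zero, Fin.cons_succ]
          have : Q' i ⊆ S' := hsub' i
          rw [Finset.disjoint_left]
          intro x hx
          exact (Finset.mem_sdiff.mp (this hx)).2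
        | succ j =>
          simp only [Fin.cons_succ]
          exact hdisj' i j (fun h => hij (by rw [h]))
    · intro i j hij
      induction i using Fin.cases with
      | zero => rw [Fin.cons_zero, hQ₀card, hq]
      | succ i =>
        induction j using Fin.cases with
        | zero => exact absurd hij (by simp [Fin.lt_def])
        | succ j =>
          simp only [Fin.cons_succ]
          exact hfull' i j (by rw [Fin.lt_def] at hij ⊢; simp only [Fin.val_succ] at hij; omega)
    · intro i j hij
      induction j using Fin.cases with
      | zero =>
        have : i = 0 := le_antisymm (by simpa using hij) (Fin.zero_le _)
        rw [this]
      | succ j =>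
        induction i using Fin.cases with
        | zero =>
          simp only [Fin.cons_zero, Fin.cons_succ]
          exact hmax (Q' j) ((hsub' j).trans Finset.sdiff_subset) (hcard' j)
        | succ i =>
          simp only [Fin.cons_succ]
          exact hanti' i j (by rw [Fin.le_def] at hij ⊢; simp only [Fin.val_succ] at hij; omega)
    · rw [Fin.sum_univ_succ]
      simp only [Fin.cons_zero, Fin.cons_succ]
      rw [hsum', hQ₀card, hS'card]
      omega
    · rw [Fin.sum_univ_succ]
      simp only [Fin.cons_zero, Fin.cons_succ]
      rw [hQ₀card]
      linarith
  · -- base case: S' = ∅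
    have hS'e : S' = ∅ := Finset.not_nonempty_iff_eq_empty.mp hS'
    have hqS : q = S.card := by
      have : S'.card = 0 := by rw [hS'e]; simp
      omega
    refine ⟨0, fun _ => Q₀, ?_, ?_, ?_, ?_, ?_, ?_, ?_, ?_⟩
    · intro _; exact hQ₀S
    · intro _; show Q₀.Nonempty; exact Finset.card_pos.mp (by omega)
    · intro _; show Q₀.card ≤ d + 1; omega
    · intro i j hij
      exact absurd (Fin.ext (by omega)) hij
    · intro i j hij
      have : i = j := Fin.ext (by omega)
      exact absurd hij (by rw [this]; exact lt_irrefl _)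
    · intro i j _; exact le_refl _
    · simp [hQ₀card, hqS]
    · have : f S' = 0 := by rw [hS'e, hnorm]
      have h2 : f S ≤ (q : ℝ) * f Q₀ := by linarith
      simpa [hQ₀card, hqS] using h2

lemma harmonic'_eq_range (t : ℕ) :
    ∑ i ∈ Finset.range t, (1 : ℝ) / ((i : ℝ) + 1) = harmonic' t := by
  induction t with
  | zero => simp [harmonic']
  | succ n ih =>
    rw [Finset.sum_range_succ, ih]
    unfold harmonic'
    rw [Finset.sum_Icc_succ_top (by omega : 1 ≤ n + 1)]
    push_cast
    ring

lemma harmonic'_mono {a b : ℕ} (h : a ≤ b) : harmonic' a ≤ harmonic' b := by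
  unfold harmonic'
  apply Finset.sum_le_sum_of_subset_of_nonneg
  · exact Finset.Icc_subset_Icc_right h
  · intro k _ _
    positivity


/-- every normalized monotone superadditive function that is `d`-scopic
submodular (i.e. of supermodular width at most `d`) is pointwise
`(d+1)·H_{⌈m/(d+1)⌉}`-approximated by CH-`(d+1)`: for every `S` there is a CH-`(d+1)`
function `g` with `(d+1)·H_{⌈m/(d+1)⌉}·g(S) ≥ f(S)` and `g(T) ≤ f(T)` for all `T`. -/
theorem sm_superadditive_pointwise_approx_by_ch (d : ℕ)
    (hm : 1 ≤ Fintype.card α) (f : Finset α → ℝ)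
    (hnorm : f ∅ = 0) (hmono : ∀ S T : Finset α, S ⊆ T → f S ≤ f T)
    (hsuperadd : ∀ S T : Finset α, Disjoint S T → f S + f T ≤ f (S ∪ T))
    (hscopic : ScopicSubmodular d f) :
    ∀ S : Finset α, ∃ g : Finset α → ℝ, CH (d + 1) g ∧
      f S ≤ ((d : ℝ) + 1) * harmonic' ⌈(Fintype.card α : ℝ) / ((d : ℝ) + 1)⌉₊ * g S ∧
      ∀ T : Finset α, g T ≤ f T := by
  have fnonneg : ∀ T : Finset α, 0 ≤ f T := fun T => hnorm ▸ hmono ∅ T (Finset.empty_subset _)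
  intro S
  by_cases hS : S.Nonempty
  · obtain ⟨t, Q, hsub, hneQ, hcardQ, hdisj, hfull, hanti, hsum, hineq⟩ :=
      greedy_decomp d f hnorm hmono hscopic S.card S rfl hS
    set K := ⌈(Fintype.card α : ℝ) / ((d : ℝ) + 1)⌉₊ with hKdef
    have hd1pos : (0 : ℝ) < (d : ℝ) + 1 := by positivity
    -- prefix sums
    set P : Fin (t + 1) → ℝ := fun i => ∑ j ∈ Finset.Iic i, ((Q j).card : ℝ) with hPdef
    have hPge : ∀ i : Fin (t + 1), ((i : ℕ) + 1 : ℝ) * ((Q i).card : ℝ) ≤ P i := by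
      intro i
      have h1 : ∀ j ∈ Finset.Iic i, ((Q i).card : ℝ) ≤ ((Q j).card : ℝ) := by
        intro j hj
        rcases lt_or_eq_of_le (Finset.mem_Iic.mp hj) with h | h
        · have h4 : (Q i).card ≤ (Q j).card := by
            have := hfull j i h
            have := hcardQ i
            omega
          exact_mod_cast h4
        · rw [h]
      calc ((i : ℕ) + 1 : ℝ) * ((Q i).card : ℝ)
          = ∑ _j ∈ Finset.Iic i, ((Q i).card : ℝ) := by
            rw [Finset.sum_const, Fin.card_Iic, nsmul_eq_mul]
            push_cast
            ring
        _ ≤ P i := Finset.sum_le_sum h1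
    have hPpos : ∀ i : Fin (t + 1), 0 < P i := by
      intro i
      have h1 : (1 : ℝ) ≤ ((Q i).card : ℝ) := by
        have := Finset.card_pos.mpr (hneQ i)
        exact_mod_cast this
      have := hPge i
      have h2 : (0:ℝ) < ((i:ℕ) + 1 : ℝ) := by positivity
      nlinarith
    -- pick the maximizing prefix
    obtain ⟨j0, _, hj0max⟩ := Finset.exists_max_image Finset.univ
      (fun i => f (Q i) * P i) ⟨0, Finset.mem_univ 0⟩
    set A := f (Q j0) * P j0 with hAdef
    have hA0 : 0 ≤ A := mul_nonneg (fnonneg _) (hPpos j0).le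
    -- the CH function
    set w := f (Q j0) / ((d : ℝ) + 1) with hwdef
    have hw0 : 0 ≤ w := div_nonneg (fnonneg _) hd1pos.le
    set emb : Fin (j0.val + 1) → Fin (t + 1) := fun i => ⟨i.val, by omega⟩ with hembdef
    set QQ : Fin (j0.val + 1) → Finset α := fun i => Q (emb i) with hQQdef
    have hemble : ∀ i, emb i ≤ j0 := by
      intro i
      rw [Fin.le_def]
      have := i.isLt
      simp only [hembdef]
      omega
    set g : Finset α → ℝ := fun T =>
      w * ∑ i ∈ Finset.univ.filter (fun i => QQ i ⊆ T), ((QQ i).card : ℝ) with hgdef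
    have hwcard : ∀ i : Fin (j0.val + 1), w * ((QQ i).card : ℝ) ≤ f (QQ i) := by
      intro i
      have h1 : f (Q j0) ≤ f (QQ i) := hanti (emb i) j0 (hemble i)
      have h2 : ((QQ i).card : ℝ) ≤ (d : ℝ) + 1 := by
        have := hcardQ (emb i)
        rw [hQQdef]
        push_cast
        exact_mod_cast this
      calc w * ((QQ i).card : ℝ) ≤ w * ((d : ℝ) + 1) :=
            mul_le_mul_of_nonneg_left h2 hw0
        _ = f (Q j0) := by
            rw [hwdef]
            field_simp
        _ ≤ f (QQ i) := h1
    refine ⟨g, ⟨w, j0.val + 1, QQ, hw0, ?_, ?_, fun T => rfl⟩, ?_, ?_⟩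
    · intro i; exact hcardQ (emb i)
    · intro i j hij
      apply hdisj
      intro h
      apply hij
      have : (emb i).val = (emb j).val := by rw [h]
      simp only [hembdef] at this
      exact Fin.ext this
    · -- main approximation inequality
      -- g S = w * P j0
      have hgS : g S = w * P j0 := by
        show w * ∑ i ∈ Finset.univ.filter (fun i => QQ i ⊆ S), ((QQ i).card : ℝ) = w * P j0
        have hfilter : Finset.univ.filter (fun i => QQ i ⊆ S) = Finset.univ := by
          apply Finset.filter_true_of_mem
          intro i _
          exact hsub (emb i)
        rw [hfilter]
        congr 1
        exact Finset.sum_bij' (fun i _ => emb i)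
          (fun j hj => (⟨j.val, by
            have h := Finset.mem_Iic.mp hj
            rw [Fin.le_def] at h
            omega⟩ : Fin (j0.val + 1)))
          (fun i _ => Finset.mem_Iic.mpr (hemble i))
          (fun j hj => Finset.mem_univ _)
          (fun i _ => by apply Fin.ext; simp [hembdef])
          (fun j hj => by apply Fin.ext; simp [hembdef])
          (fun i _ => rfl)
      have hlast : (t : ℝ) * ((d : ℝ) + 1) < (Fintype.card α : ℝ) := by
        have hsplit : ∑ i : Fin (t + 1), (Q i).card
            = (∑ i : Fin t, (Q i.castSucc).card) + (Q (Fin.last t)).card :=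
          Fin.sum_univ_castSucc _
        have hcs : ∀ i : Fin t, (Q i.castSucc).card = d + 1 := by
          intro i
          exact hfull i.castSucc (Fin.last t) (Fin.castSucc_lt_last i)
        have h1 : ∑ i : Fin t, (Q i.castSucc).card = t * (d + 1) := by
          rw [Finset.sum_congr rfl (fun i _ => hcs i)]
          simp [Finset.sum_const, mul_comm]
        have h2 : 1 ≤ (Q (Fin.last t)).card := Finset.card_pos.mpr (hneQ _)
        have h3 : S.card ≤ Fintype.card α := Finset.card_le_univ S
        have : t * (d + 1) + 1 ≤ Fintype.card α := by omega
        push_cast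
        exact_mod_cast by
          have : (t * (d + 1) + 1 : ℝ) ≤ (Fintype.card α : ℝ) := by exact_mod_cast this
          push_cast at this
          linarith
      have htK : t + 1 ≤ K := by
        have ht : (t : ℝ) < (Fintype.card α : ℝ) / ((d : ℝ) + 1) := by
          rw [lt_div_iff₀ hd1pos]
          exact hlast
        have := Nat.lt_ceil.mpr ht
        omega
      have key : f S ≤ A * harmonic' (t + 1) := by
        have hterm : ∀ i : Fin (t + 1),
            ((Q i).card : ℝ) * f (Q i) ≤ A * (1 / ((i : ℕ) + 1 : ℝ)) := by
          intro i
          have hip : (0 : ℝ) < ((i : ℕ) + 1 : ℝ) := by positivity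
          rw [mul_one_div, le_div_iff₀ hip]
          calc ((Q i).card : ℝ) * f (Q i) * ((i : ℕ) + 1 : ℝ)
              = f (Q i) * (((i : ℕ) + 1 : ℝ) * ((Q i).card : ℝ)) := by ring
            _ ≤ f (Q i) * P i := mul_le_mul_of_nonneg_left (hPge i) (fnonneg _)
            _ ≤ A := hj0max i (Finset.mem_univ i)
        calc f S ≤ ∑ i : Fin (t + 1), ((Q i).card : ℝ) * f (Q i) := hineq
          _ ≤ ∑ i : Fin (t + 1), A * (1 / ((i : ℕ) + 1 : ℝ)) :=
              Finset.sum_le_sum (fun i _ => hterm i)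
          _ = A * ∑ i : Fin (t + 1), (1 : ℝ) / ((i : ℕ) + 1 : ℝ) := by
              rw [Finset.mul_sum]
          _ = A * harmonic' (t + 1) := by
              rw [← harmonic'_eq_range, Fin.sum_univ_eq_sum_range
                (fun i => (1 : ℝ) / ((i : ℝ) + 1))]
      have hH : harmonic' (t + 1) ≤ harmonic' K := harmonic'_mono htK
      have hfinal : ((d : ℝ) + 1) * harmonic' K * g S = harmonic' K * A := by
        rw [hgS, hwdef, hAdef]
        field_simp
      rw [hfinal]
      calc f S ≤ A * harmonic' (t + 1) := key
        _ ≤ A * harmonic' K := mul_le_mul_of_nonneg_left hH hA0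
        _ = harmonic' K * A := mul_comm _ _
    · -- g T ≤ f T
      intro T
      show w * ∑ i ∈ Finset.univ.filter (fun i => QQ i ⊆ T), ((QQ i).card : ℝ) ≤ f T
      rw [Finset.mul_sum]
      calc ∑ i ∈ Finset.univ.filter (fun i => QQ i ⊆ T), w * ((QQ i).card : ℝ)
          ≤ ∑ i ∈ Finset.univ.filter (fun i => QQ i ⊆ T), f (QQ i) :=
            Finset.sum_le_sum (fun i _ => hwcard i)
        _ ≤ f T := by
            apply superadd_family f hnorm hmono hsuperadd QQ
            · intro i j hij
              apply hdisj
              intro h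
              apply hij
              have : (emb i).val = (emb j).val := by rw [h]
              simp only [hembdef] at this
              exact Fin.ext this
            · intro i hi
              exact (Finset.mem_filter.mp hi).2
  · -- S = ∅
    have hSe : S = ∅ := Finset.not_nonempty_iff_eq_empty.mp hS
    refine ⟨fun _ => 0, ⟨0, 0, Fin.elim0, le_refl 0, fun i => i.elim0,
      fun i _ _ => i.elim0, fun T => by simp⟩, ?_, ?_⟩
    · rw [hSe, hnorm]
      simp
    · intro T
      exact fnonneg T
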